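/- Let a > 0 and define u : ℝ² → ℝ by u(x) = −2·ln(1 + a·‖x‖²). Then for every R > 0, (1/2)·∫_{B_R(0)} ‖∇u(x)‖² dx = 8π·( ln(1 + aR²) + 1/(1 + aR²) − 1 ), where B_R(0) is the open Euclidean ball of radius R centered at the origin. -/

import Mathlib

open Real MeasureTheory

theorem stmt_3 (a : ℝ) (ha : 0 < a)
    (u : EuclideanSpace ℝ (Fin 2) → ℝ)
    (hu : ∀ x, u x = -2 * Real.log (1 + a * ‖x‖ ^ 2)) :
    ∀ R : ℝ, 0 < R →
      (1 / 2) * (∫ x in Metric.ball (0 : EuclideanSpace ℝ (Fin 2)) R, ‖gradient u x‖ ^ 2)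
        = 8 * π * (Real.log (1 + a * R ^ 2) + 1 / (1 + a * R ^ 2) - 1) := by
  intro R hR
  have hgrad : ∀ x : EuclideanSpace ℝ (Fin 2),
      gradient u x = (-4 * a / (1 + a * ‖x‖ ^ 2)) • x := by
    intro x
    have hpos : 0 < 1 + a * ‖x‖ ^ 2 := by positivity
    have h1 : HasFDerivAt (fun x : EuclideanSpace ℝ (Fin 2) => 1 + a * ‖x‖ ^ 2)
        (a • (2 • (innerSL ℝ x))) x := by
      have : HasFDerivAt (fun x : EuclideanSpace ℝ (Fin 2) => ‖x‖ ^ 2)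
          (2 • (innerSL ℝ x)) x := by
        simpa using (hasFDerivAt_id x).norm_sq
      exact (this.const_mul a).const_add 1
    have h2 : HasDerivAt (fun t : ℝ => -2 * Real.log t) (-2 / (1 + a * ‖x‖ ^ 2))
        (1 + a * ‖x‖ ^ 2) := by
      have := (Real.hasDerivAt_log hpos.ne').const_mul (-2 : ℝ)
      simpa [div_eq_mul_inv] using this
    have h3 : HasFDerivAt u ((-2 / (1 + a * ‖x‖ ^ 2)) • (a • (2 • (innerSL ℝ x)))) x := by
      have hfun : u = fun y => -2 * Real.log (1 + a * ‖y‖ ^ 2) := funext hu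
      rw [hfun]
      exact (h2.comp_hasFDerivAt x h1 :)
    have h4 : HasGradientAt u ((-4 * a / (1 + a * ‖x‖ ^ 2)) • x) x := by
      rw [hasGradientAt_iff_hasFDerivAt]
      refine h3.congr_fderiv ?_
      ext y
      simp [InnerProductSpace.toDual_apply_apply, inner_smul_left, real_inner_smul_left]
      ring
    exact h4.gradient
  set g : ℝ → ℝ := fun r => 16 * a ^ 2 * r ^ 2 / (1 + a * r ^ 2) ^ 2 with hg
  have hpt : ∀ x : EuclideanSpace ℝ (Fin 2), ‖gradient u x‖ ^ 2 = g ‖x‖ := by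
    intro x
    have hpos : 0 < 1 + a * ‖x‖ ^ 2 := by positivity
    rw [hgrad x, norm_smul]
    rw [Real.norm_eq_abs, abs_div, abs_of_pos hpos]
    rw [mul_pow, div_pow]
    have : |(-4 * a)| = 4 * a := by
      rw [abs_of_nonpos (by nlinarith)]; ring
    rw [this]
    ring
  have step1 : (∫ x in Metric.ball (0 : EuclideanSpace ℝ (Fin 2)) R, ‖gradient u x‖ ^ 2)
      = ∫ x : EuclideanSpace ℝ (Fin 2), Set.indicator (Set.Iio R) g ‖x‖ := by
    simp_rw [hpt]
    rw [← integral_indicator measurableSet_ball]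
    congr 1
    funext x
    by_cases hx : x ∈ Metric.ball (0 : EuclideanSpace ℝ (Fin 2)) R
    · rw [Set.indicator_of_mem hx, Set.indicator_of_mem (by
        simpa [mem_ball_zero_iff] using hx : ‖x‖ ∈ Set.Iio R)]
    · rw [Set.indicator_of_notMem hx, Set.indicator_of_notMem (by
        simpa [mem_ball_zero_iff] using hx : ‖x‖ ∉ Set.Iio R)]
  have hdim : Module.finrank ℝ (EuclideanSpace ℝ (Fin 2)) = 2 := by
    simp [finrank_euclideanSpace_fin]
  have hvol : (volume (Metric.ball (0 : EuclideanSpace ℝ (Fin 2)) 1)).toReal = π := by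
    rw [EuclideanSpace.volume_ball]
    have h2 : (Fintype.card (Fin 2) : ℝ) = 2 := by simp
    rw [Fintype.card_fin]
    norm_num
    exact Real.sq_sqrt Real.pi_nonneg
  have step2 := integral_fun_norm_addHaar (volume : Measure (EuclideanSpace ℝ (Fin 2)))
    (Set.indicator (Set.Iio R) g)
  rw [hdim, measureReal_def, hvol] at step2
  -- 1D integral
  have step3 : (∫ y in Set.Ioi (0:ℝ), y ^ (2 - 1) • Set.indicator (Set.Iio R) g y)
      = ∫ y in Set.Ioo (0:ℝ) R, y * g y := by
    have : ∀ y : ℝ, y ^ (2 - 1) • Set.indicator (Set.Iio R) g y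
        = Set.indicator (Set.Iio R) (fun y => y * g y) y := by
      intro y
      by_cases hy : y ∈ Set.Iio R
      · rw [Set.indicator_of_mem hy, Set.indicator_of_mem hy]; simp
      · rw [Set.indicator_of_notMem hy, Set.indicator_of_notMem hy]; simp
    simp_rw [this]
    rw [setIntegral_indicator measurableSet_Iio, Set.Ioi_inter_Iio]
  have hF : ∀ r : ℝ, HasDerivAt (fun r : ℝ => 8 * (Real.log (1 + a * r ^ 2) + 1 / (1 + a * r ^ 2)))
      (r * g r) r := by
    intro r
    have hpos : 0 < 1 + a * r ^ 2 := by positivity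
    have h1 : HasDerivAt (fun r : ℝ => 1 + a * r ^ 2) (2 * a * r) r := by
      have := ((hasDerivAt_pow 2 r).const_mul a).const_add 1
      refine this.congr_deriv ?_
      ring
    have hlog : HasDerivAt (fun r : ℝ => Real.log (1 + a * r ^ 2))
        ((2 * a * r) / (1 + a * r ^ 2)) r := h1.log hpos.ne'
    have hinv : HasDerivAt (fun r : ℝ => (1 + a * r ^ 2)⁻¹)
        (-(2 * a * r) / (1 + a * r ^ 2) ^ 2) r := h1.inv hpos.ne'
    have := (hlog.add hinv).const_mul (8 : ℝ)
    have hfeq : (fun r : ℝ => 8 * (Real.log (1 + a * r ^ 2) + 1 / (1 + a * r ^ 2))) = fun y => 8 * (((fun r : ℝ => Real.log (1 + a * r ^ 2)) + fun r : ℝ => (1 + a * r ^ 2)⁻¹ : ℝ → ℝ) y) := by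
      funext s; simp only [one_div, Pi.add_apply]
    rw [hfeq]; refine this.congr_deriv ?_
    · rw [hg]; field_simp; ring
  have hcont : Continuous (fun r : ℝ => r * g r) := by
    rw [hg]
    apply Continuous.mul continuous_id
    apply Continuous.div (by fun_prop) (by fun_prop)
    intro r
    positivity
  have step4 : (∫ y in Set.Ioo (0:ℝ) R, y * g y)
      = 8 * (Real.log (1 + a * R ^ 2) + 1 / (1 + a * R ^ 2) - 1) := by
    rw [← integral_Ioc_eq_integral_Ioo, ← intervalIntegral.integral_of_le hR.le]
    rw [intervalIntegral.integral_eq_sub_of_hasDerivAt (fun r _ => hF r)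
      (hcont.intervalIntegrable 0 R)]
    simp
    ring
  rw [step1, step2, step3, step4]
  rw [nsmul_eq_mul, smul_eq_mul]
  push_cast
  ring
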